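/- The group homomorphism B(G₂) → B₁₃ᵇʳ determined by x ↦ us and y ↦ (us)·t·(us)⁻¹ (equivalently y ↦ u s t s⁻¹ u⁻¹) is well defined and is a group isomorphism; its inverse is the homomorphism B₁₃ᵇʳ → B(G₂) determined by s ↦ y·x·(y·x·y)⁻¹·x, t ↦ x⁻¹·y·x, and u ↦ (x·y·x)⁻¹·y·(x·y·x). -/
import Mathlib

noncomputable section

/-- The defining relators of the braid group of `G₁₃`: generators `s, t, u`
(indexed `0, 1, 2`) and relations `tust = ustu` and `stust = ustus`. -/
def b13rels : Set (FreeGroup (Fin 3)) :=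
  { FreeGroup.of 1 * FreeGroup.of 2 * FreeGroup.of 0 * FreeGroup.of 1 *
      (FreeGroup.of 2 * FreeGroup.of 0 * FreeGroup.of 1 * FreeGroup.of 2)⁻¹,
    FreeGroup.of 0 * FreeGroup.of 1 * FreeGroup.of 2 * FreeGroup.of 0 * FreeGroup.of 1 *
      (FreeGroup.of 2 * FreeGroup.of 0 * FreeGroup.of 1 * FreeGroup.of 2 * FreeGroup.of 0)⁻¹ }

/-- The braid group `B₁₃ᵇʳ` of the complex reflection group `G₁₃`. -/
abbrev B13br := PresentedGroup b13rels

/-- The braid generator `s`. -/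
def bs : B13br := PresentedGroup.of 0
/-- The braid generator `t`. -/
def bt : B13br := PresentedGroup.of 1
/-- The braid generator `u`. -/
def bu : B13br := PresentedGroup.of 2


/-- The defining relator of the Artin group of type `I₂(6)` (the braid group of the Weyl
group `G₂`): generators `x, y` (indexed `0, 1`) and the relation `xyxyxy = yxyxyx`. -/
def bG2rels : Set (FreeGroup (Fin 2)) :=
  { FreeGroup.of 0 * FreeGroup.of 1 * FreeGroup.of 0 * FreeGroup.of 1 * FreeGroup.of 0 *
      FreeGroup.of 1 *
      (FreeGroup.of 1 * FreeGroup.of 0 * FreeGroup.of 1 * FreeGroup.of 0 * FreeGroup.of 1 *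
        FreeGroup.of 0)⁻¹ }

/-- The braid group `B(G₂)` of the Weyl group `G₂`, i.e. the Artin group of type `I₂(6)`. -/
abbrev BG2 := PresentedGroup bG2rels

/-- The generator `x` of `B(G₂)`. -/
def gx : BG2 := PresentedGroup.of 0
/-- The generator `y` of `B(G₂)`. -/
def gy : BG2 := PresentedGroup.of 1

/-! ### Auxiliary lemmas -/

lemma pg_rel {α : Type*} {rels : Set (FreeGroup α)} {r : FreeGroup α} (h : r ∈ rels) :
    PresentedGroup.mk rels r = 1 :=
  (QuotientGroup.eq_one_iff r).mpr (Subgroup.subset_normalClosure h)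

lemma relB1 : bt * bu * bs * bt = bu * bs * bt * bu := by
  have h := pg_rel (rels := b13rels)
    (r := FreeGroup.of 1 * FreeGroup.of 2 * FreeGroup.of 0 * FreeGroup.of 1 *
      (FreeGroup.of 2 * FreeGroup.of 0 * FreeGroup.of 1 * FreeGroup.of 2)⁻¹)
    (Set.mem_insert _ _)
  simp only [map_mul, map_inv, mul_inv_eq_one] at h
  exact h

lemma relB2 : bs * bt * bu * bs * bt = bu * bs * bt * bu * bs := by
  have h := pg_rel (rels := b13rels)
    (r := FreeGroup.of 0 * FreeGroup.of 1 * FreeGroup.of 2 * FreeGroup.of 0 * FreeGroup.of 1 *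
      (FreeGroup.of 2 * FreeGroup.of 0 * FreeGroup.of 1 * FreeGroup.of 2 * FreeGroup.of 0)⁻¹)
    (Set.mem_insert_of_mem _ rfl)
  simp only [map_mul, map_inv, mul_inv_eq_one] at h
  exact h

lemma relG : gx * gy * gx * gy * gx * gy = gy * gx * gy * gx * gy * gx := by
  have h := pg_rel (rels := bG2rels)
    (r := FreeGroup.of 0 * FreeGroup.of 1 * FreeGroup.of 0 * FreeGroup.of 1 * FreeGroup.of 0 *
      FreeGroup.of 1 *
      (FreeGroup.of 1 * FreeGroup.of 0 * FreeGroup.of 1 * FreeGroup.of 0 * FreeGroup.of 1 *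
        FreeGroup.of 0)⁻¹)
    (Set.mem_singleton _)
  simp only [map_mul, map_inv, mul_inv_eq_one] at h
  exact h

/-- `d = ust`. -/
def dd : B13br := bu * bs * bt

lemma comm_inv {G : Type*} [Group G] {a b : G} (h : a * b = b * a) : a⁻¹ * b = b * a⁻¹ := by
  calc a⁻¹ * b = a⁻¹ * (b * a) * a⁻¹ := by group
    _ = a⁻¹ * (a * b) * a⁻¹ := by rw [h]
    _ = b * a⁻¹ := by group

lemma hd1 : bu * dd * dd = dd * dd * bt := by
  unfold dd
  calc bu * (bu * bs * bt) * (bu * bs * bt)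
      = bu * (bu * bs * bt * bu * bs) * bt := by group
    _ = bu * (bs * bt * bu * bs * bt) * bt := by rw [← relB2]
    _ = bu * bs * bt * (bu * bs * bt) * bt := by group

lemma hd2 : bt * dd = dd * bu := by
  unfold dd
  calc bt * (bu * bs * bt) = bt * bu * bs * bt := by group
    _ = bu * bs * bt * bu := relB1

lemma hd3 : bt * (dd * dd * dd) = dd * dd * dd * bt := by
  calc bt * (dd * dd * dd) = bt * dd * (dd * dd) := by group
    _ = dd * bu * (dd * dd) := by rw [hd2]
    _ = dd * (bu * dd * dd) := by group
    _ = dd * (dd * dd * bt) := by rw [hd1]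
    _ = dd * dd * dd * bt := by group

lemma keyA : bu * bs * (dd * dd * dd) = dd * dd * dd * (bu * bs) := by
  have h3' : bt⁻¹ * (dd * dd * dd) = dd * dd * dd * bt⁻¹ := comm_inv hd3
  calc bu * bs * (dd * dd * dd)
      = dd * (bt⁻¹ * (dd * dd * dd)) := by unfold dd; group
    _ = dd * (dd * dd * dd * bt⁻¹) := by rw [h3']
    _ = dd * dd * dd * (dd * bt⁻¹) := by group
    _ = dd * dd * dd * (bu * bs) := by unfold dd; group

/-! BG2-side words: `S`, `T`, `U` are the images of `s`, `t`, `u` under `ψ`. -/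

lemma e1 : (gx⁻¹ * gy * gx) * ((gx * gy * gx)⁻¹ * gy * (gx * gy * gx)) *
    (gy * gx * (gy * gx * gy)⁻¹ * gx) * (gx⁻¹ * gy * gx) = gx⁻¹ * (gy * gx * gy * gx) := by
  calc (gx⁻¹ * gy * gx) * ((gx * gy * gx)⁻¹ * gy * (gx * gy * gx)) *
      (gy * gx * (gy * gx * gy)⁻¹ * gx) * (gx⁻¹ * gy * gx)
      = gx⁻¹ * gx⁻¹ * (gy * gx * gy * gx * gy * gx) * gy⁻¹ := by group
    _ = gx⁻¹ * gx⁻¹ * (gx * gy * gx * gy * gx * gy) * gy⁻¹ := by rw [← relG]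
    _ = gx⁻¹ * (gy * gx * gy * gx) := by group

lemma e2 : ((gx * gy * gx)⁻¹ * gy * (gx * gy * gx)) * (gy * gx * (gy * gx * gy)⁻¹ * gx) *
    (gx⁻¹ * gy * gx) * ((gx * gy * gx)⁻¹ * gy * (gx * gy * gx)) =
    gx⁻¹ * (gy * gx * gy * gx) := by
  calc ((gx * gy * gx)⁻¹ * gy * (gx * gy * gx)) * (gy * gx * (gy * gx * gy)⁻¹ * gx) *
      (gx⁻¹ * gy * gx) * ((gx * gy * gx)⁻¹ * gy * (gx * gy * gx))
      = gx⁻¹ * gy⁻¹ * gx⁻¹ * (gy * gx * gy * gx * gy * gx) *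
          (gy⁻¹ * (gx⁻¹ * gy⁻¹ * gx⁻¹ * gy * gx * gy * gx)) := by group
    _ = gx⁻¹ * gy⁻¹ * gx⁻¹ * (gx * gy * gx * gy * gx * gy) *
          (gy⁻¹ * (gx⁻¹ * gy⁻¹ * gx⁻¹ * gy * gx * gy * gx)) := by rw [← relG]
    _ = gx⁻¹ * (gy * gx * gy * gx) := by group

lemma f1 : (gy * gx * (gy * gx * gy)⁻¹ * gx) * (gx⁻¹ * gy * gx) *
    ((gx * gy * gx)⁻¹ * gy * (gx * gy * gx)) * (gy * gx * (gy * gx * gy)⁻¹ * gx) *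
    (gx⁻¹ * gy * gx) = gy * gx * gx := by
  calc (gy * gx * (gy * gx * gy)⁻¹ * gx) * (gx⁻¹ * gy * gx) *
      ((gx * gy * gx)⁻¹ * gy * (gx * gy * gx)) * (gy * gx * (gy * gx * gy)⁻¹ * gx) *
      (gx⁻¹ * gy * gx)
      = (gy * gx * (gy * gx * gy)⁻¹ * gx) *
        ((gx⁻¹ * gy * gx) * ((gx * gy * gx)⁻¹ * gy * (gx * gy * gx)) *
          (gy * gx * (gy * gx * gy)⁻¹ * gx) * (gx⁻¹ * gy * gx)) := by group
    _ = (gy * gx * (gy * gx * gy)⁻¹ * gx) * (gx⁻¹ * (gy * gx * gy * gx)) := by rw [e1]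
    _ = gy * gx * gx := by group

lemma f2 : ((gx * gy * gx)⁻¹ * gy * (gx * gy * gx)) * (gy * gx * (gy * gx * gy)⁻¹ * gx) *
    (gx⁻¹ * gy * gx) * ((gx * gy * gx)⁻¹ * gy * (gx * gy * gx)) *
    (gy * gx * (gy * gx * gy)⁻¹ * gx) = gy * gx * gx := by
  calc ((gx * gy * gx)⁻¹ * gy * (gx * gy * gx)) * (gy * gx * (gy * gx * gy)⁻¹ * gx) *
      (gx⁻¹ * gy * gx) * ((gx * gy * gx)⁻¹ * gy * (gx * gy * gx)) *
      (gy * gx * (gy * gx * gy)⁻¹ * gx)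
      = (((gx * gy * gx)⁻¹ * gy * (gx * gy * gx)) * (gy * gx * (gy * gx * gy)⁻¹ * gx) *
          (gx⁻¹ * gy * gx) * ((gx * gy * gx)⁻¹ * gy * (gx * gy * gx))) *
        (gy * gx * (gy * gx * gy)⁻¹ * gx) := by group
    _ = gx⁻¹ * (gy * gx * gy * gx) * (gy * gx * (gy * gx * gy)⁻¹ * gx) := by rw [e2]
    _ = gx⁻¹ * (gy * gx * gy * gx * gy * gx) * (gy⁻¹ * gx⁻¹ * gy⁻¹ * gx) := by group
    _ = gx⁻¹ * (gx * gy * gx * gy * gx * gy) * (gy⁻¹ * gx⁻¹ * gy⁻¹ * gx) := by rw [← relG]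
    _ = gy * gx * gx := by group

lemma eUS : ((gx * gy * gx)⁻¹ * gy * (gx * gy * gx)) * (gy * gx * (gy * gx * gy)⁻¹ * gx) = gx := by
  calc ((gx * gy * gx)⁻¹ * gy * (gx * gy * gx)) * (gy * gx * (gy * gx * gy)⁻¹ * gx)
      = gx⁻¹ * gy⁻¹ * gx⁻¹ * (gy * gx * gy * gx * gy * gx) * (gy⁻¹ * gx⁻¹ * gy⁻¹ * gx) := by
        group
    _ = gx⁻¹ * gy⁻¹ * gx⁻¹ * (gx * gy * gx * gy * gx * gy) * (gy⁻¹ * gx⁻¹ * gy⁻¹ * gx) := by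
        rw [← relG]
    _ = gx := by group

/-- The homomorphism `B(G₂) → B₁₃ᵇʳ` determined by `x ↦ us` and
`y ↦ (us)·t·(us)⁻¹` is well defined and is a group isomorphism, with inverse the
homomorphism determined by `s ↦ yx(yxy)⁻¹x`, `t ↦ x⁻¹yx`, `u ↦ (xyx)⁻¹y(xyx)`. -/
theorem stmt9 :
    ∃ (φ : BG2 →* B13br) (ψ : B13br →* BG2),
      φ gx = bu * bs ∧
      φ gy = (bu * bs) * bt * (bu * bs)⁻¹ ∧
      ψ bs = gy * gx * (gy * gx * gy)⁻¹ * gx ∧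
      ψ bt = gx⁻¹ * gy * gx ∧
      ψ bu = (gx * gy * gx)⁻¹ * gy * (gx * gy * gx) ∧
      (∀ g, ψ (φ g) = g) ∧ (∀ h, φ (ψ h) = h) := by
  have hφrels : ∀ r ∈ bG2rels,
      FreeGroup.lift (![bu * bs, (bu * bs) * bt * (bu * bs)⁻¹] : Fin 2 → B13br) r = 1 := by
    intro r hr
    simp only [bG2rels, Set.mem_singleton_iff] at hr
    subst hr
    simp only [map_mul, map_inv, FreeGroup.lift_apply_of, Matrix.cons_val_zero, Matrix.cons_val_one,
      Matrix.head_cons, mul_inv_eq_one]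
    calc (bu * bs) * ((bu * bs) * bt * (bu * bs)⁻¹) * (bu * bs) *
        ((bu * bs) * bt * (bu * bs)⁻¹) * (bu * bs) * ((bu * bs) * bt * (bu * bs)⁻¹)
        = bu * bs * (dd * dd * dd) * (bu * bs)⁻¹ := by unfold dd; group
      _ = dd * dd * dd * (bu * bs) * (bu * bs)⁻¹ := by rw [keyA]
      _ = ((bu * bs) * bt * (bu * bs)⁻¹) * (bu * bs) * ((bu * bs) * bt * (bu * bs)⁻¹) *
          (bu * bs) * ((bu * bs) * bt * (bu * bs)⁻¹) * (bu * bs) := by unfold dd; group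
  have hψrels : ∀ r ∈ b13rels,
      FreeGroup.lift (![gy * gx * (gy * gx * gy)⁻¹ * gx, gx⁻¹ * gy * gx,
        (gx * gy * gx)⁻¹ * gy * (gx * gy * gx)] : Fin 3 → BG2) r = 1 := by
    intro r hr
    simp only [b13rels, Set.mem_insert_iff, Set.mem_singleton_iff] at hr
    rcases hr with hr | hr <;> subst hr <;>
      simp only [map_mul, map_inv, FreeGroup.lift_apply_of, Matrix.cons_val_zero, Matrix.cons_val_one,
        Matrix.head_cons, Matrix.cons_val_two, Matrix.tail_cons, mul_inv_eq_one]
    · exact e1.trans e2.symm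
    · exact f1.trans f2.symm
  have hφx : (PresentedGroup.toGroup hφrels) gx = bu * bs :=
    PresentedGroup.toGroup.of hφrels
  have hφy : (PresentedGroup.toGroup hφrels) gy = (bu * bs) * bt * (bu * bs)⁻¹ :=
    PresentedGroup.toGroup.of hφrels
  have hψs : (PresentedGroup.toGroup hψrels) bs = gy * gx * (gy * gx * gy)⁻¹ * gx :=
    PresentedGroup.toGroup.of hψrels
  have hψt : (PresentedGroup.toGroup hψrels) bt = gx⁻¹ * gy * gx :=
    PresentedGroup.toGroup.of hψrels
  have hψu : (PresentedGroup.toGroup hψrels) bu = (gx * gy * gx)⁻¹ * gy * (gx * gy * gx) :=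
    PresentedGroup.toGroup.of hψrels
  refine ⟨PresentedGroup.toGroup hφrels, PresentedGroup.toGroup hψrels,
    hφx, hφy, hψs, hψt, hψu, ?_, ?_⟩
  · -- ψ ∘ φ = id
    have hcomp : (PresentedGroup.toGroup hψrels).comp (PresentedGroup.toGroup hφrels) =
        MonoidHom.id BG2 := by
      apply PresentedGroup.ext
      intro i
      fin_cases i
      · show (PresentedGroup.toGroup hψrels) ((PresentedGroup.toGroup hφrels) gx) = gx
        rw [hφx, map_mul, hψu, hψs]
        exact eUS
      · show (PresentedGroup.toGroup hψrels) ((PresentedGroup.toGroup hφrels) gy) = gy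
        rw [hφy]
        simp only [map_mul, map_inv, hψs, hψt, hψu]
        rw [eUS]
        group
    intro g
    have := DFunLike.congr_fun hcomp g
    simpa using this
  · -- φ ∘ ψ = id
    have hcomp : (PresentedGroup.toGroup hφrels).comp (PresentedGroup.toGroup hψrels) =
        MonoidHom.id B13br := by
      apply PresentedGroup.ext
      intro i
      fin_cases i
      · show (PresentedGroup.toGroup hφrels) ((PresentedGroup.toGroup hψrels) bs) = bs
        rw [hψs]
        simp only [map_mul, map_inv, hφx, hφy]
        calc ((bu * bs) * bt * (bu * bs)⁻¹) * (bu * bs) *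
            (((bu * bs) * bt * (bu * bs)⁻¹) * (bu * bs) * ((bu * bs) * bt * (bu * bs)⁻¹))⁻¹ *
            (bu * bs)
            = (bu * bs * bt * bu * bs) * (bt⁻¹ * bs⁻¹ * bu⁻¹ * bt⁻¹) := by group
          _ = (bs * bt * bu * bs * bt) * (bt⁻¹ * bs⁻¹ * bu⁻¹ * bt⁻¹) := by rw [← relB2]
          _ = bs := by group
      · show (PresentedGroup.toGroup hφrels) ((PresentedGroup.toGroup hψrels) bt) = bt
        rw [hψt]
        simp only [map_mul, map_inv, hφx, hφy]
        group
      · show (PresentedGroup.toGroup hφrels) ((PresentedGroup.toGroup hψrels) bu) = bu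
        rw [hψu]
        simp only [map_mul, map_inv, hφx, hφy]
        calc ((bu * bs) * ((bu * bs) * bt * (bu * bs)⁻¹) * (bu * bs))⁻¹ *
            ((bu * bs) * bt * (bu * bs)⁻¹) *
            ((bu * bs) * ((bu * bs) * bt * (bu * bs)⁻¹) * (bu * bs))
            = (bt⁻¹ * bs⁻¹ * bu⁻¹) * (bt * bu * bs * bt) := by group
          _ = (bt⁻¹ * bs⁻¹ * bu⁻¹) * (bu * bs * bt * bu) := by rw [relB1]
          _ = bu := by group
    intro h
    have := DFunLike.congr_fun hcomp h
    simpa using this
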